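/- Let n ≥ 3 and let G be a simple graph on a countably infinite vertex set such that G contains no clique on n vertices and G has the Kₙ-free extension property: for all disjoint finite sets A, B of vertices such that A contains no clique on n−1 vertices, there exists a vertex v ∉ A ∪ B adjacent to every vertex of A and to no vertex of B. Then G does not have the galah property: there is a partition (C, D) of the vertex set of G such that the induced subgraph on C is not isomorphic to G and D contains no subset on which the induced subgraph is isomorphic to G. -/
import Mathlib


universe u

/-- The generic `Kₙ`-free graph (`n ≥ 3`) does not have the galah property: there is a
partition `(C, Cᶜ)` of its vertex set such that the induced subgraph on `C` is not
isomorphic to `G` and no subset of `Cᶜ` induces a subgraph isomorphic to `G`. -/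
theorem statement6 (n : ℕ) (hn : 3 ≤ n) (V : Type u) [Countable V] [Infinite V]
    (G : SimpleGraph V) (hfree : G.CliqueFree n)
    (hext : ∀ A B : Finset V, Disjoint A B →
      (¬ ∃ s : Finset V, s ⊆ A ∧ G.IsNClique (n - 1) s) →
      ∃ v : V, v ∉ A ∧ v ∉ B ∧ (∀ a ∈ A, G.Adj v a) ∧ ∀ b ∈ B, ¬ G.Adj v b) :
    ∃ C : Set V, ¬ Nonempty (G.induce C ≃g G) ∧
      ¬ ∃ S : Set V, S ⊆ Cᶜ ∧ Nonempty (G.induce S ≃g G) := by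
  classical
  obtain ⟨v⟩ : Nonempty V := inferInstance
  -- every vertex of `G` has a neighbor
  have hdense : ∀ u : V, ∃ w : V, G.Adj u w := by
    intro u
    have hnc : ¬ ∃ s : Finset V, s ⊆ ({u} : Finset V) ∧ G.IsNClique (n - 1) s := by
      rintro ⟨s, hs, hc⟩
      have h1 : s.card ≤ 1 := le_trans (Finset.card_le_card hs) (by simp)
      rw [hc.card_eq] at h1
      omega
    obtain ⟨w, _, _, ha, _⟩ := hext {u} ∅ (Finset.disjoint_empty_right _) hnc
    exact ⟨w, (ha u (by simp)).symm⟩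
  -- `G` contains cliques of every size up to `n - 1`
  have hbuild : ∀ k : ℕ, k ≤ n - 1 → ∃ s : Finset V, G.IsNClique k s := by
    intro k
    induction k with
    | zero => exact fun _ => ⟨∅, by simp⟩
    | succ k ih =>
      intro hk
      obtain ⟨s, hs⟩ := ih (by omega)
      have hnc : ¬ ∃ t : Finset V, t ⊆ s ∧ G.IsNClique (n - 1) t := by
        rintro ⟨t, hts, ht⟩
        have h1 : t.card ≤ s.card := Finset.card_le_card hts
        rw [ht.card_eq, hs.card_eq] at h1
        omega
      obtain ⟨w, hw1, _, ha, _⟩ := hext s ∅ (Finset.disjoint_empty_right _) hnc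
      exact ⟨insert w s, hs.insert fun b hb => ha b hb⟩
  refine ⟨(G.neighborSet v)ᶜ, ?_, ?_⟩
  · rintro ⟨f⟩
    have hv : v ∈ (G.neighborSet v)ᶜ := by
      simp [SimpleGraph.mem_neighborSet]
    obtain ⟨w, hw⟩ := hdense (f ⟨v, hv⟩)
    have h2 : (G.induce (G.neighborSet v)ᶜ).Adj (f.symm (f ⟨v, hv⟩)) (f.symm w) :=
      f.symm.map_adj_iff.mpr hw
    rw [f.symm_apply_apply] at h2
    have h3 : G.Adj v ((f.symm w : ((G.neighborSet v)ᶜ : Set V)) : V) := h2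
    exact (f.symm w).2 h3
  · rintro ⟨S, hS, ⟨f⟩⟩
    obtain ⟨s, hs⟩ := hbuild (n - 1) le_rfl
    set g : V → V := fun x => ((f.symm x : S) : V) with hg
    have hginj : Function.Injective g := fun a b h =>
      f.symm.injective (Subtype.val_injective h)
    have hmemS : ∀ x : V, g x ∈ S := fun x => (f.symm x).2
    have hadjv : ∀ x : V, G.Adj v (g x) := by
      intro x
      have := hS (hmemS x)
      rwa [compl_compl, SimpleGraph.mem_neighborSet] at this
    have ht : G.IsNClique (n - 1) (s.image g) := by
      constructor
      · intro a ha b hb hab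
        simp only [Finset.coe_image, Set.mem_image, Finset.mem_coe] at ha hb
        obtain ⟨x, hx, rfl⟩ := ha
        obtain ⟨y, hy, rfl⟩ := hb
        have hxy : x ≠ y := fun h => hab (by rw [h])
        have hGxy : G.Adj x y := hs.1 hx hy hxy
        have : (G.induce S).Adj (f.symm x) (f.symm y) := f.symm.map_adj_iff.mpr hGxy
        exact this
      · rw [Finset.card_image_of_injective _ hginj, hs.card_eq]
    have hvnot : G.IsNClique ((n - 1) + 1) (insert v (s.image g)) := by
      refine ht.insert ?_
      intro b hb
      obtain ⟨x, _, rfl⟩ := Finset.mem_image.mp hb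
      exact hadjv x
    have hn1 : (n - 1) + 1 = n := by omega
    rw [hn1] at hvnot
    exact hfree _ hvnot
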